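/- Fix any single sample path of the DCBO recursion. If the best objective value is strictly decreased only finitely many times, i.e. there is N₀ such that f(p_{n+1}) = f(p_n) for all n ≥ N₀, then the minimal minimizing index i_n := min I_n is eventually constant, equal to some i_∞, and the consensus point is eventually constant: there exist i_∞ ∈ {1,…,N}, N₁ ≥ N₀ and a point p_∞ ∈ S such that p_n = x_n^{i_∞} = p_∞ for all n ≥ N₁. -/

import Mathlib

open MeasureTheory Filter Topology

noncomputable section

/-- `Euc d` is the `d`-dimensional Euclidean space `ℝ^d`. -/
abbrev Euc (d : ℕ) := EuclideanSpace ℝ (Fin d)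

/-- Entrywise (Hadamard) product on `ℝ^d`. -/
def hadamard {d : ℕ} (u v : Euc d) : Euc d := WithLp.toLp 2 (fun k => u k * v k)

/-- The anisotropic DCBO update map `F₁(x,y,η) = x + γ¹(y−x) + γ²(y−x)⊙η`. -/
def F1 {d : ℕ} (γ1 γ2 : ℝ) (x y η : Euc d) : Euc d :=
  x + γ1 • (y - x) + γ2 • hadamard (y - x) η

/-- The isotropic DCBO update map `F₂(x,y,η) = x + γ̄¹(y−x) + γ̄²‖y−x‖η/√d`. -/
def F2 {d : ℕ} (γ1 γ2 : ℝ) (x y η : Euc d) : Euc d :=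
  x + γ1 • (y - x) + ((γ2 * ‖y - x‖) / Real.sqrt d) • η

lemma hadamard_zero_left {d : ℕ} (v : Euc d) : hadamard 0 v = 0 := by
  ext k; simp [hadamard]

/-- On a sample path of the DCBO recursion on which the best value
is strictly decreased only finitely many times (say `f(p_{n+1}) = f(p_n)` for all
`n ≥ N₀`), the minimal minimizing index `ι n` is eventually constant, equal to some
`iLim`, and the consensus point is eventually constant: there are `iLim`, `N₁ ≥ N₀` and
`pLim ∈ S` with `p_n = x_n^{iLim} = pLim` for all `n ≥ N₁`. -/
theorem dcbo_eventually_constant_consensus_point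
    {d N : ℕ} (hd : 1 ≤ d) (hN : 1 ≤ N)
    (f : Euc d → EReal) (hf : Measurable f)
    (S : Set (Euc d)) (hS : S = {y | f y < ⊤}) (hSne : S.Nonempty) (hScl : IsClosed S)
    (γ1 γ2 γb1 γb2 : ℝ)
    (hγ1 : γ1 ∈ Set.Ioo (0:ℝ) 1) (hγ2 : 0 ≤ γ2)
    (hγb1 : γb1 ∈ Set.Ioo (0:ℝ) 1) (hγb2 : 0 ≤ γb2)
    (choice : Fin N → Bool)
    (x : ℕ → Fin N → Euc d) (η : ℕ → Fin N → Euc d)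
    (p : ℕ → Euc d) (ι : ℕ → Fin N)
    (hp : ∀ n, p n = x n (ι n))
    (hmin : ∀ n j, f (x n (ι n)) ≤ f (x n j))
    (htie : ∀ n j, f (x n j) = f (x n (ι n)) → ι n ≤ j)
    (hrec : ∀ n i, x (n+1) i =
      if choice i then F1 γ1 γ2 (x n i) (p n) (η n i)
      else F2 γb1 γb2 (x n i) (p n) (η n i))
    (hx0 : ∀ i, x 0 i ∈ S)
    (N₀ : ℕ) (hstall : ∀ n, N₀ ≤ n → f (p (n+1)) = f (p n)) :
    ∃ (iLim : Fin N) (N₁ : ℕ) (pLim : Euc d), N₀ ≤ N₁ ∧ pLim ∈ S ∧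
      ∀ n, N₁ ≤ n → ι n = iLim ∧ p n = x n iLim ∧ p n = pLim := by
  -- the leader is a fixed point of its own update
  have hfix : ∀ n, x (n+1) (ι n) = p n := by
    intro n
    rw [hrec]
    cases h : choice (ι n) <;>
      simp [h, F1, F2, hadamard_zero_left, ← hp n, sub_self]
  -- best value is nonincreasing
  have hdec : ∀ n, f (p (n+1)) ≤ f (p n) := by
    intro n
    calc f (p (n+1)) = f (x (n+1) (ι (n+1))) := by rw [hp]
      _ ≤ f (x (n+1) (ι n)) := hmin _ _
      _ = f (p n) := by rw [hfix]
  have hanti : Antitone fun n => f (p n) := antitone_nat_of_succ_le hdec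
  -- after N₀, the minimal index is nonincreasing
  have hι : ∀ n, N₀ ≤ n → ι (n+1) ≤ ι n := by
    intro n hn
    apply htie
    rw [hfix n, ← hp (n+1)]
    exact (hstall n hn).symm
  set g : ℕ → ℕ := fun k => (ι (N₀ + k) : ℕ) with hg
  have hganti : Antitone g := by
    apply antitone_nat_of_succ_le
    intro k
    exact hι (N₀ + k) (Nat.le_add_right _ _)
  obtain ⟨k₀, hk₀⟩ := Nat.sInf_mem (Set.range_nonempty g)
  have hgconst : ∀ k, k₀ ≤ k → g k = g k₀ := by
    intro k hk
    refine le_antisymm (hganti hk) ?_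
    rw [hk₀]
    exact Nat.sInf_le ⟨k, rfl⟩
  refine ⟨ι (N₀ + k₀), N₀ + k₀, p (N₀ + k₀), Nat.le_add_right _ _, ?_, ?_⟩
  · rw [hS]
    have h0 : f (x 0 (ι 0)) < ⊤ := by
      have := hx0 (ι 0); rw [hS] at this; exact this
    have := hanti (Nat.zero_le (N₀ + k₀))
    simp only [Set.mem_setOf_eq]
    calc f (p (N₀ + k₀)) ≤ f (p 0) := this
      _ = f (x 0 (ι 0)) := by rw [hp]
      _ < ⊤ := h0
  · have hιc : ∀ n, N₀ + k₀ ≤ n → ι n = ι (N₀ + k₀) := by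
      intro n hn
      have hn' : n = N₀ + (n - N₀) := by omega
      have hk : k₀ ≤ n - N₀ := by omega
      have := hgconst (n - N₀) hk
      apply Fin.ext
      rw [hn']
      exact this
    have hpc : ∀ n, N₀ + k₀ ≤ n → p n = p (N₀ + k₀) := by
      intro n hn
      induction n, hn using Nat.le_induction with
      | base => rfl
      | succ m hm ih =>
        rw [← ih]
        rw [hp (m+1), hιc (m+1) (by omega), ← hιc m hm, hfix]
    intro n hn
    refine ⟨hιc n hn, ?_, hpc n hn⟩
    rw [hp n, hιc n hn]
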